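/- arXiv:1206.3541 — 4 statements merged into one kernel-verified Lean document; each statement's English description precedes it below -/
import Mathlib

section
/- Let R : [0,1] → ℝ be concave and twice continuously differentiable, and let X, Y : [0,1] → ℝ be continuously differentiable functions with X(0) = Y(0) = 0, X(1) = Y(1), X(q) ≤ Y(q) for all q, and ∫₀¹ x(q) R'(q) dq = ∫₀¹ y(q) R'(q) dq, where x = X' and y = Y'. Then for every q ∈ [0,1], either R''(q) = 0 or X(q) = Y(q). -/
open Set MeasureTheory intervalIntegral Function

theorem stmt_2 (R X Y : ℝ → ℝ)
    (hR : ContDiff ℝ 2 R) (hRconc : ConcaveOn ℝ (Set.Icc 0 1) R)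
    (hX : ContDiff ℝ 1 X) (hY : ContDiff ℝ 1 Y)
    (hX0 : X 0 = 0) (hY0 : Y 0 = 0) (h1 : X 1 = Y 1)
    (hle : ∀ q ∈ Set.Icc (0:ℝ) 1, X q ≤ Y q)
    (hint : ∫ q in (0:ℝ)..1, deriv X q * deriv R q
          = ∫ q in (0:ℝ)..1, deriv Y q * deriv R q) :
    ∀ q ∈ Set.Icc (0:ℝ) 1, deriv (deriv R) q = 0 ∨ X q = Y q := by
  have hR2 : ContDiff ℝ (1+1) R := by exact_mod_cast hR
  have hR' : ContDiff ℝ 1 (deriv R) := (contDiff_succ_iff_deriv.mp hR2).2.2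
  have hRd : Differentiable ℝ R := hR.differentiable two_ne_zero
  have hR'd : Differentiable ℝ (deriv R) := hR'.differentiable one_ne_zero
  have hR''c : Continuous (deriv (deriv R)) := hR'.continuous_deriv le_rfl
  have hXd : Differentiable ℝ X := hX.differentiable one_ne_zero
  have hYd : Differentiable ℝ Y := hY.differentiable one_ne_zero
  have hX'c : Continuous (deriv X) := hX.continuous_deriv le_rfl
  have hY'c : Continuous (deriv Y) := hY.continuous_deriv le_rfl
  -- D = Y - X
  set D : ℝ → ℝ := fun q => Y q - X q with hD
  have hDc : Continuous D := hYd.continuous.sub hXd.continuous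
  set g : ℝ → ℝ := fun q => D q * deriv (deriv R) q with hg
  have hgc : Continuous g := hDc.mul hR''c
  -- integration by parts: ∫ D * R'' = D 1 * R' 1 - D 0 * R' 0 - ∫ D' * R'
  have ibp : ∫ q in (0:ℝ)..1, D q * deriv (deriv R) q
      = D 1 * deriv R 1 - D 0 * deriv R 0
        - ∫ q in (0:ℝ)..1, (deriv Y q - deriv X q) * deriv R q := by
    apply intervalIntegral.integral_mul_deriv_eq_deriv_mul
    · intro x _
      exact ((hYd x).hasDerivAt.sub (hXd x).hasDerivAt)
    · intro x _
      exact (hR'd x).hasDerivAt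
    · exact ((hY'c.sub hX'c)).intervalIntegrable 0 1
    · exact hR''c.intervalIntegrable 0 1
  have hD0 : D 0 = 0 := by simp [hD, hX0, hY0]
  have hD1 : D 1 = 0 := by simp [hD, h1]
  have hsplit : ∫ q in (0:ℝ)..1, (deriv Y q - deriv X q) * deriv R q = 0 := by
    have : ∫ q in (0:ℝ)..1, (deriv Y q - deriv X q) * deriv R q
        = (∫ q in (0:ℝ)..1, deriv Y q * deriv R q)
          - ∫ q in (0:ℝ)..1, deriv X q * deriv R q := by
      rw [← intervalIntegral.integral_sub
        (f := fun q => deriv Y q * deriv R q) (g := fun q => deriv X q * deriv R q)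
        ((hY'c.mul (hR'.continuous)).intervalIntegrable 0 1)
        ((hX'c.mul (hR'.continuous)).intervalIntegrable 0 1)]
      simp [sub_mul]
    rw [this, hint, sub_self]
  have hint0 : ∫ q in (0:ℝ)..1, g q = 0 := by
    simp only [hg]
    rw [ibp, hD0, hD1, hsplit]; ring
  -- R'' ≤ 0 on Icc 0 1
  have hanti : AntitoneOn (deriv R) (Set.Icc 0 1) := by
    have hconv : ConvexOn ℝ (Set.Icc 0 1) (fun q => -R q) := hRconc.neg
    have hmono : MonotoneOn (deriv (fun q => -R q)) (Set.Icc 0 1) :=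
      hconv.monotoneOn_deriv (fun x _ => ((hRd x).neg))
    intro a ha b hb hab
    have := hmono ha hb hab
    simp only [deriv.fun_neg] at this
    linarith
  have hR''np : ∀ q ∈ Set.Icc (0:ℝ) 1, deriv (deriv R) q ≤ 0 := by
    have hIoo : ∀ q ∈ Set.Ioo (0:ℝ) 1, deriv (deriv R) q ≤ 0 := by
      intro q hq
      have hd : HasDerivAt (deriv R) (deriv (deriv R) q) q := (hR'd q).hasDerivAt
      have hslope : Filter.Tendsto (slope (deriv R) q) (nhdsWithin q (Set.Ioi q))
          (nhds (deriv (deriv R) q)) :=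
        (hasDerivAt_iff_tendsto_slope.mp hd).mono_left
          (nhdsWithin_mono q (fun x hx => ne_of_gt hx))
      refine le_of_tendsto hslope ?_
      filter_upwards [Ioo_mem_nhdsGT_of_mem (Set.mem_Ico.mpr ⟨le_refl q, hq.2⟩)] with y hy
      have hyq : q < y := hy.1
      have h1 : deriv R y ≤ deriv R q :=
        hanti ⟨hq.1.le, hq.2.le⟩ ⟨le_trans hq.1.le hyq.le, hy.2.le⟩ hyq.le
      rw [slope_def_field]
      have := div_nonpos_of_nonpos_of_nonneg (sub_nonpos.mpr h1) (sub_pos.mpr hyq).le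
      simpa [div_eq_iff] using this
    -- extend to closure
    have hclosed : IsClosed {q : ℝ | deriv (deriv R) q ≤ 0} :=
      isClosed_le hR''c continuous_const
    intro q hq
    have : Set.Icc (0:ℝ) 1 ⊆ {q : ℝ | deriv (deriv R) q ≤ 0} := by
      rw [← closure_Ioo (by norm_num : (0:ℝ) ≠ 1)]
      exact closure_minimal hIoo hclosed
    exact this hq
  -- g ≤ 0 on Icc, integral 0, continuous ⇒ g = 0 on Icc
  have hgzero : ∀ q ∈ Set.Icc (0:ℝ) 1, g q = 0 := by
    by_contra hcon
    push_neg at hcon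
    obtain ⟨q₀, hq₀, hgq₀⟩ := hcon
    have hgneg : g q₀ < 0 := by
      rcases lt_or_gt_of_ne hgq₀ with h | h
      · exact h
      · exfalso
        have hD0' : 0 ≤ D q₀ := sub_nonneg.mpr (hle q₀ hq₀)
        have := mul_nonpos_of_nonneg_of_nonpos hD0' (hR''np q₀ hq₀)
        simp only [hg] at h; linarith
    -- open set where g < 0
    have hU : IsOpen {x : ℝ | g x < 0} := isOpen_lt hgc continuous_const
    have hmeet : ({x : ℝ | g x < 0} ∩ Set.Ioo 0 1).Nonempty := by
      have hq₀cl : q₀ ∈ closure (Set.Ioo (0:ℝ) 1) := by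
        rw [closure_Ioo (by norm_num : (0:ℝ) ≠ 1)]; exact hq₀
      exact mem_closure_iff.mp hq₀cl _ hU hgneg
    have hpos : (0:ℝ) < ∫ q in (0:ℝ)..1, -g q := by
      rw [intervalIntegral.integral_pos_iff_support_of_nonneg_ae']
      · refine ⟨by norm_num, ?_⟩
        have hsub : {x : ℝ | g x < 0} ∩ Set.Ioo 0 1 ⊆ support (fun q => -g q) ∩ Set.Ioc 0 1 := by
          rintro x ⟨hx1, hx2⟩
          have hx1' : g x < 0 := hx1
          exact ⟨by simpa [Function.mem_support] using (neg_pos.mpr hx1').ne',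
            Set.Ioo_subset_Ioc_self hx2⟩
        calc (0:ENNReal) < volume ({x : ℝ | g x < 0} ∩ Set.Ioo 0 1) :=
              (hU.inter isOpen_Ioo).measure_pos volume hmeet
          _ ≤ _ := measure_mono hsub
      · rw [Set.uIoc_of_le (by norm_num : (0:ℝ) ≤ 1)]
        refine (ae_restrict_iff' measurableSet_Ioc).mpr (Filter.Eventually.of_forall ?_)
        intro x hx
        have hD0' : 0 ≤ D x := sub_nonneg.mpr (hle x ⟨hx.1.le, hx.2⟩)
        have := mul_nonpos_of_nonneg_of_nonpos hD0' (hR''np x ⟨hx.1.le, hx.2⟩)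
        simp only [hg, Pi.zero_apply]
        linarith
      · exact (hgc.neg).intervalIntegrable 0 1
    have hneg : ∫ q in (0:ℝ)..1, -g q = 0 := by
      rw [intervalIntegral.integral_neg, hint0, neg_zero]
    rw [hneg] at hpos
    exact lt_irrefl 0 hpos
  intro q hq
  have := hgzero q hq
  rcases mul_eq_zero.mp this with h | h
  · right; linarith [sub_eq_zero.mp h]
  · left; exact h
end

section
/- Let x, y : [0,1] → [0,1] be non-increasing step functions with finitely many pieces, with cumulative functions X(q) = ∫₀^q x and Y(q) = ∫₀^q y satisfying X(q) ≤ Y(q) for all q and X(1) = Y(1). Then there exists a finite sequence of interval-resampling operations (each replacing y on an interval [a,b] by its average value on [a,b]) transforming y into x; moreover at most m operations suffice when x and y together have at most m pieces. -/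
open MeasureTheory

/-- Interval resampling: replace `f` on `[a,b]` by its average value there. -/
noncomputable def resample (f : ℝ → ℝ) (p : ℝ × ℝ) : ℝ → ℝ :=
  fun t => if t ∈ Set.Icc p.1 p.2 then (∫ s in p.1..p.2, f s) / (p.2 - p.1) else f t

private lemma foldl_out (L : List (ℝ × ℝ)) (b : ℝ) (hL : ∀ p ∈ L, b ≤ p.1)
    (f : ℝ → ℝ) (t : ℝ) (ht : t < b) : L.foldl resample f t = f t := by
  induction L generalizing f with
  | nil => rfl
  | cons p L ih =>
    rw [List.foldl_cons, ih (fun p hp => hL p (List.mem_cons_of_mem _ hp))]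
    have h1 : t ∉ Set.Icc p.1 p.2 :=
      fun h => absurd (le_trans (hL p (List.mem_cons_self)) h.1) (not_le.mpr ht)
    simp [resample, h1]

private lemma key (n : ℕ) : ∀ (x y : ℝ → ℝ) (q : Fin (n+1) → ℝ),
    Monotone q → q (Fin.last n) = 1 →
    AntitoneOn x (Set.Icc (q 0) 1) → AntitoneOn y (Set.Icc (q 0) 1) →
    (∀ t ∈ Set.Icc (q 0) 1, x t ∈ Set.Icc (0:ℝ) 1) →
    (∀ t ∈ Set.Icc (q 0) 1, y t ∈ Set.Icc (0:ℝ) 1) →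
    (∀ i : Fin n, ∀ s ∈ Set.Ioo (q i.castSucc) (q i.succ),
      ∀ t ∈ Set.Ioo (q i.castSucc) (q i.succ), x s = x t) →
    (∀ t ∈ Set.Icc (q 0) 1, ∫ s in (q 0)..t, x s ≤ ∫ s in (q 0)..t, y s) →
    (∫ s in (q 0)..(1:ℝ), x s = ∫ s in (q 0)..(1:ℝ), y s) →
    ∃ L : List (ℝ × ℝ), L.length ≤ n ∧
      (∀ p' ∈ L, q 0 ≤ p'.1 ∧ p'.1 ≤ p'.2 ∧ p'.2 ≤ 1) ∧
      (L.foldl resample y) =ᵐ[volume.restrict (Set.Icc (q 0) 1)] x := by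
  induction n with
  | zero =>
    intro x y q _ hlast _ _ _ _ _ _ _
    have h0 : q 0 = 1 := by simpa using hlast
    refine ⟨[], le_rfl, by simp, ?_⟩
    have hz : volume.restrict (Set.Icc (q 0) 1) = 0 := by
      rw [h0, Set.Icc_self, Measure.restrict_eq_zero]
      exact measure_singleton 1
    rw [hz]
    simp [Filter.EventuallyEq, ae_zero]
  | succ n ih =>
    intro x y q hq hlast hx hy hxr hyr hpiece hdom heq
    have hq1 : (q ∘ Fin.succ) 0 = q 1 := by
      simp [Fin.succ_zero_eq_one]
    have hqmono : Monotone (q ∘ Fin.succ) := hq.comp Fin.strictMono_succ.monotone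
    have hqlast : (q ∘ Fin.succ) (Fin.last n) = 1 := by
      rw [Function.comp_apply, Fin.succ_last]; exact hlast
    have hpiece' : ∀ i : Fin n, ∀ s ∈ Set.Ioo ((q ∘ Fin.succ) i.castSucc) ((q ∘ Fin.succ) i.succ),
        ∀ t ∈ Set.Ioo ((q ∘ Fin.succ) i.castSucc) ((q ∘ Fin.succ) i.succ), x s = x t := by
      intro i s hs t ht
      have e1 : (q ∘ Fin.succ) i.castSucc = q (i.succ).castSucc := by
        rw [Function.comp_apply, Fin.succ_castSucc]
      have e2 : (q ∘ Fin.succ) i.succ = q (i.succ).succ := rfl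
      rw [e1, e2] at hs ht
      exact hpiece i.succ s hs t ht
    have h01 : q 0 ≤ q 1 := hq (by norm_num [Fin.le_def])
    have ha1 : q 1 ≤ 1 := hlast ▸ hq (Fin.le_last 1)
    rcases eq_or_lt_of_le h01 with hdeg | hlt
    · -- degenerate first piece: q 0 = q 1
      rw [← hq1] at hdeg
      obtain ⟨L, h1, h2, h3⟩ := ih x y (q ∘ Fin.succ) hqmono hqlast
        (hdeg ▸ hx) (hdeg ▸ hy) (hdeg ▸ hxr) (hdeg ▸ hyr) hpiece' (hdeg ▸ hdom) (hdeg ▸ heq)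
      exact ⟨L, h1.trans (Nat.le_succ n), by rw [hdeg]; exact h2, by rw [hdeg]; exact h3⟩
    · -- main case : q 0 < q 1
      set a := q 0 with ha
      set b := q 1 with hb
      have hsub : Set.Icc b 1 ⊆ Set.Icc a 1 := Set.Icc_subset_Icc h01 le_rfl
      set mid := (a + b) / 2 with hmid
      have hmid1 : a < mid := by rw [hmid]; linarith
      have hmid2 : mid < b := by rw [hmid]; linarith
      have hmidIcc : mid ∈ Set.Icc a 1 := ⟨hmid1.le, hmid2.le.trans ha1⟩
      set v := x mid with hv
      have ha1' : a ≤ 1 := h01.trans ha1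
      -- piece 0 of x is constant v
      have hxv : ∀ t ∈ Set.Ioo a b, x t = v := by
        intro t ht
        have := hpiece 0 t (by simpa [Fin.castSucc_zero, Fin.succ_zero_eq_one] using ht)
          mid (by simpa [Fin.castSucc_zero, Fin.succ_zero_eq_one] using Set.mem_Ioo.mpr ⟨hmid1, hmid2⟩)
        exact this
      -- integrability
      have hxint : ∀ s ∈ Set.Icc a 1, ∀ t ∈ Set.Icc a 1, IntervalIntegrable x volume s t :=
        fun s hs t ht => (hx.mono (Set.uIcc_subset_Icc hs ht)).intervalIntegrable
      have hyint : ∀ s ∈ Set.Icc a 1, ∀ t ∈ Set.Icc a 1, IntervalIntegrable y volume s t :=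
        fun s hs t ht => (hy.mono (Set.uIcc_subset_Icc hs ht)).intervalIntegrable
      -- cumulative of x on first piece
      have hXconst : ∀ t ∈ Set.Icc a b, ∫ s in a..t, x s = v * (t - a) := by
        intro t ht
        have h1 : ∫ s in a..t, x s = ∫ s in a..t, (fun _ => v) s := by
          apply intervalIntegral.integral_congr_ae
          have hb1 : ∀ᵐ s : ℝ, s ∉ ({b} : Set ℝ) :=
            measure_eq_zero_iff_ae_notMem.mp (measure_singleton b)
          filter_upwards [hb1] with s hs hsmem
          rw [Set.uIoc_of_le ht.1] at hsmem
          exact hxv s ⟨hsmem.1, lt_of_le_of_ne (hsmem.2.trans ht.2)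
            (by simpa [Set.mem_singleton_iff] using hs)⟩
        rw [h1]; simp [mul_comm]
      -- cumulative of x below the tangent line beyond b
      have hXle : ∀ t ∈ Set.Icc b 1, ∫ s in a..t, x s ≤ v * (t - a) := by
        intro t ht
        have hsplit : (∫ s in a..b, x s) + ∫ s in b..t, x s = ∫ s in a..t, x s :=
          intervalIntegral.integral_add_adjacent_intervals
            (hxint a ⟨le_rfl, ha1'⟩ b ⟨h01, ha1⟩) (hxint b ⟨h01, ha1⟩ t (hsub ht))
        have h2 : ∫ s in b..t, x s ≤ ∫ s in b..t, (fun _ => v) s := by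
          apply intervalIntegral.integral_mono_on ht.1 (hxint b ⟨h01, ha1⟩ t (hsub ht))
            intervalIntegrable_const
          intro s hs
          exact hx hmidIcc ⟨h01.trans hs.1, hs.2.trans ht.2⟩ ((hmid2.le.trans hs.1))
        have h3 := hXconst b ⟨h01, le_rfl⟩
        have h4 : ∫ s in b..t, (fun _ => v) s = v * (t - b) := by simp [mul_comm]
        nlinarith [hsplit, h2, h3, h4]
      -- lower/upper bounds on chords of Y
      have hYlow : ∀ s ∈ Set.Icc a 1, ∀ t ∈ Set.Icc a 1, s ≤ t →
          (t - s) * y t ≤ ∫ u in s..t, y u := by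
        intro s hs t ht hst
        have h2 : ∫ u in s..t, (fun _ => y t) u ≤ ∫ u in s..t, y u := by
          apply intervalIntegral.integral_mono_on hst intervalIntegrable_const
            (hyint s hs t ht)
          intro u hu
          exact hy ⟨hs.1.trans hu.1, hu.2.trans ht.2⟩ ht hu.2
        simpa [mul_comm] using h2
      have hYhigh : ∀ s ∈ Set.Icc a 1, ∀ t ∈ Set.Icc a 1, s ≤ t →
          ∫ u in s..t, y u ≤ (t - s) * y s := by
        intro s hs t ht hst
        have h2 : ∫ u in s..t, y u ≤ ∫ u in s..t, (fun _ => y s) u := by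
          apply intervalIntegral.integral_mono_on hst (hyint s hs t ht)
            intervalIntegrable_const
          intro u hu
          exact hy hs ⟨hs.1.trans hu.1, hu.2.trans ht.2⟩ hu.1
        simpa [mul_comm] using h2
      -- continuity of the cumulative of y
      have hYcont : ContinuousOn (fun t => ∫ s in a..t, y s) (Set.Icc a 1) := by
        have := intervalIntegral.continuousOn_primitive_interval'
          (hyint a ⟨le_rfl, ha1'⟩ 1 ⟨ha1', le_rfl⟩) Set.left_mem_uIcc
        rwa [Set.uIcc_of_le ha1'] at this
      -- the contact point c
      set g := fun t => (∫ s in a..t, y s) - v * (t - a) with hg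
      have hgcont : ContinuousOn g (Set.Icc b 1) :=
        (hYcont.mono hsub).sub ((continuous_const.mul (continuous_id.sub continuous_const)).continuousOn)
      set S := Set.Icc b 1 ∩ g ⁻¹' (Set.Ici 0) with hS
      have hSclosed : IsClosed S :=
        hgcont.preimage_isClosed_of_isClosed isClosed_Icc isClosed_Ici
      have hbS : b ∈ S := by
        refine ⟨⟨le_rfl, ha1⟩, ?_⟩
        have := hdom b ⟨h01, ha1⟩
        rw [hXconst b ⟨h01, le_rfl⟩] at this
        simpa [hg] using by linarith
      have hSbdd : BddAbove S := ⟨1, fun t ht => ht.1.2⟩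
      set c := sSup S with hc
      have hcS : c ∈ S := hSclosed.csSup_mem ⟨b, hbS⟩ hSbdd
      have hbc : b ≤ c := le_csSup hSbdd hbS
      have hc1 : c ≤ 1 := hcS.1.2
      have hac : a < c := hlt.trans_le hbc
      have hcIcc : c ∈ Set.Icc a 1 := ⟨hac.le, hc1⟩
      -- Y c = v * (c - a)
      have hYc : ∫ s in a..c, y s = v * (c - a) := by
        refine le_antisymm ?_ (by have := hcS.2; simp [hg] at this; linarith)
        rcases eq_or_lt_of_le hc1 with hceq | hclt
        · rw [hceq, ← heq]
          exact hXle 1 ⟨ha1, le_rfl⟩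
        · by_contra hgt
          push_neg at hgt
          have hgc : 0 < g c := by simp [hg]; linarith
          have hcw : ContinuousWithinAt g (Set.Icc b 1) c := hgcont.continuousWithinAt hcS.1
          rw [Metric.continuousWithinAt_iff] at hcw
          obtain ⟨δ, hδ, hball⟩ := hcw (g c) hgc
          set t := min 1 (c + δ/2) with htdef
          have htc : c < t := by
            rw [htdef]; exact lt_min hclt (by linarith)
          have ht1 : t ≤ 1 := min_le_left _ _
          have htIcc : t ∈ Set.Icc b 1 := ⟨hbc.trans htc.le, ht1⟩
          have htd : dist t c < δ := by
            rw [Real.dist_eq, abs_of_pos (by linarith)]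
            have : t ≤ c + δ/2 := min_le_right _ _
            linarith
          have := hball htIcc htd
          rw [Real.dist_eq] at this
          have hgt0 : 0 < g t := by
            rcases abs_lt.mp this with ⟨h1', _⟩; linarith
          have : t ∈ S := ⟨htIcc, le_of_lt hgt0⟩
          exact absurd (le_csSup hSbdd this) (not_le.mpr htc)
      -- Y is above the line on [a, c]
      have hYge : ∀ t ∈ Set.Icc a c, v * (t - a) ≤ ∫ s in a..t, y s := by
        intro t ht
        by_cases htb : t ≤ b
        · have := hdom t ⟨ht.1, htb.trans ha1⟩
          rw [hXconst t ⟨ht.1, htb⟩] at this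
          exact this
        · push_neg at htb
          have htIcc : t ∈ Set.Icc a 1 := ⟨ht.1, ht.2.trans hc1⟩
          have h1 := hYlow a ⟨le_rfl, ha1'⟩ t htIcc ht.1
          have h2 := hYhigh t htIcc c hcIcc ht.2
          have h3 : (∫ s in a..t, y s) + ∫ s in t..c, y s = ∫ s in a..c, y s :=
            intervalIntegral.integral_add_adjacent_intervals
              (hyint a ⟨le_rfl, ha1'⟩ t htIcc) (hyint t htIcc c hcIcc)
          have hta : a < t := hlt.trans htb
          nlinarith [mul_le_mul_of_nonneg_left h1 (sub_nonneg.mpr ht.2),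
            mul_le_mul_of_nonneg_left h2 (sub_nonneg.mpr hta.le)]
      -- the resampled function
      set y' := resample y (a, c) with hy'def
      have hty : ∀ t, y' t = if t ∈ Set.Icc a c then v else y t := by
        intro t
        rw [hy'def]
        simp only [resample]
        rw [hYc, mul_div_cancel_right₀ _ (sub_ne_zero.mpr (ne_of_gt hac))]
      have hvr : v ∈ Set.Icc (0:ℝ) 1 := hxr mid hmidIcc
      have hyc_le : y c ≤ v := by
        have h1 := hYlow a ⟨le_rfl, ha1'⟩ c hcIcc hac.le
        rw [hYc] at h1
        nlinarith [sub_pos.mpr hac]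
      have hy'anti : AntitoneOn y' (Set.Icc a 1) := by
        intro s hs t ht hst
        rw [hty, hty]
        by_cases h1 : t ∈ Set.Icc a c
        · have h2 : s ∈ Set.Icc a c := ⟨hs.1, hst.trans h1.2⟩
          rw [if_pos h1, if_pos h2]
        · rw [if_neg h1]
          have hct : c < t := lt_of_not_ge fun h => h1 ⟨ht.1, h⟩
          have hytv : y t ≤ v := (hy hcIcc ht hct.le).trans hyc_le
          by_cases h2 : s ∈ Set.Icc a c
          · rw [if_pos h2]; exact hytv
          · rw [if_neg h2]; exact hy hs ht hst
      have hy'int : ∀ s ∈ Set.Icc a 1, ∀ t ∈ Set.Icc a 1, IntervalIntegrable y' volume s t :=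
        fun s hs t ht => (hy'anti.mono (Set.uIcc_subset_Icc hs ht)).intervalIntegrable
      have hIy1 : ∀ s ∈ Set.Icc a 1, ∀ t ∈ Set.Icc a 1, s ≤ t → t ≤ c →
          ∫ u in s..t, y' u = v * (t - s) := by
        intro s hs t ht hst htc
        have h5 : ∫ u in s..t, y' u = ∫ u in s..t, (fun _ => v) u := by
          apply intervalIntegral.integral_congr
          intro u hu
          rw [Set.uIcc_of_le hst] at hu
          rw [hty]
          exact if_pos ⟨hs.1.trans hu.1, hu.2.trans htc⟩
        rw [h5]; simp [mul_comm]
      have hIy2 : ∀ t, c ≤ t → ∫ u in c..t, y' u = ∫ u in c..t, y u := by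
        intro t hct
        apply intervalIntegral.integral_congr_ae
        refine Filter.Eventually.of_forall (fun s hsmem => ?_)
        rw [Set.uIoc_of_le hct] at hsmem
        rw [hty]
        exact if_neg (fun h => absurd h.2 (not_le.mpr hsmem.1))
      have hIx' : ∀ t ∈ Set.Icc b 1, ∫ s in b..t, x s = (∫ s in a..t, x s) - v * (b - a) := by
        intro t ht
        have hsplit : (∫ s in a..b, x s) + ∫ s in b..t, x s = ∫ s in a..t, x s :=
          intervalIntegral.integral_add_adjacent_intervals
            (hxint a ⟨le_rfl, ha1'⟩ b ⟨h01, ha1⟩) (hxint b ⟨h01, ha1⟩ t (hsub ht))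
        rw [hXconst b ⟨h01, le_rfl⟩] at hsplit
        linarith
      have hIy' : ∀ t ∈ Set.Icc b 1, ∫ s in b..t, y' s =
          if t ≤ c then v * (t - b) else (∫ s in a..t, y s) - v * (b - a) := by
        intro t ht
        by_cases htc : t ≤ c
        · rw [if_pos htc]
          exact hIy1 b ⟨h01, ha1⟩ t (hsub ht) ht.1 htc
        · rw [if_neg htc]
          push_neg at htc
          have hsplit : (∫ s in b..c, y' s) + ∫ s in c..t, y' s = ∫ s in b..t, y' s :=
            intervalIntegral.integral_add_adjacent_intervals
              (hy'int b ⟨h01, ha1⟩ c hcIcc) (hy'int c hcIcc t (hsub ht))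
          have hsplit2 : (∫ s in a..c, y s) + ∫ s in c..t, y s = ∫ s in a..t, y s :=
            intervalIntegral.integral_add_adjacent_intervals
              (hyint a ⟨le_rfl, ha1'⟩ c hcIcc) (hyint c hcIcc t (hsub ht))
          rw [hIy1 b ⟨h01, ha1⟩ c hcIcc hbc le_rfl, hIy2 t htc.le] at hsplit
          rw [hYc] at hsplit2
          linarith
      have hdom' : ∀ t ∈ Set.Icc b 1, ∫ s in b..t, x s ≤ ∫ s in b..t, y' s := by
        intro t ht
        rw [hIx' t ht, hIy' t ht]
        by_cases htc : t ≤ c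
        · rw [if_pos htc]
          have := hXle t ht
          linarith
        · rw [if_neg htc]
          have := hdom t (hsub ht)
          linarith
      have heq' : ∫ s in b..(1:ℝ), x s = ∫ s in b..(1:ℝ), y' s := by
        rw [hIx' 1 ⟨ha1, le_rfl⟩, hIy' 1 ⟨ha1, le_rfl⟩]
        by_cases h1c : (1:ℝ) ≤ c
        · rw [if_pos h1c]
          have hceq : c = 1 := le_antisymm hc1 h1c
          rw [heq]
          rw [hceq] at hYc
          rw [hYc]
          ring
        · rw [if_neg h1c, heq]
      have hy'r : ∀ t ∈ Set.Icc b 1, y' t ∈ Set.Icc (0:ℝ) 1 := by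
        intro t ht
        rw [hty]
        split_ifs
        · exact hvr
        · exact hyr t (hsub ht)
      obtain ⟨L', hL'len, hL'mem, hL'ae⟩ := ih x y' (q ∘ Fin.succ) hqmono hqlast
        (by rw [hq1]; exact hx.mono hsub) (by rw [hq1]; exact hy'anti.mono hsub)
        (by rw [hq1]; exact fun t ht => hxr t (hsub ht)) (by rw [hq1]; exact hy'r)
        hpiece' (by rw [hq1]; exact hdom') (by rw [hq1]; exact heq')
      rw [hq1] at hL'mem hL'ae
      refine ⟨(a, c) :: L', by simp only [List.length_cons]; omega, ?_, ?_⟩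
      · intro p' hp'
        rcases List.mem_cons.mp hp' with h | h
        · rw [h]; exact ⟨le_rfl, hac.le, hc1⟩
        · obtain ⟨h1, h2, h3⟩ := hL'mem p' h
          exact ⟨h01.trans h1, h2, h3⟩
      · have hF : ∀ t, t < b → (L'.foldl resample y') t = y' t :=
          fun t ht => foldl_out L' b (fun p hp => (hL'mem p hp).1) y' t ht
        rw [Filter.EventuallyEq, ae_restrict_iff' measurableSet_Icc] at hL'ae ⊢
        have hne : ∀ᵐ t : ℝ, t ∉ ({a} : Set ℝ) :=
          measure_eq_zero_iff_ae_notMem.mp (measure_singleton a)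
        have hfold : List.foldl resample y ((a, c) :: L') = L'.foldl resample y' := rfl
        rw [hfold]
        filter_upwards [hL'ae, hne] with t hI hnm htIcc
        by_cases htb : b ≤ t
        · exact hI ⟨htb, htIcc.2⟩
        · push_neg at htb
          have hta : a < t := lt_of_le_of_ne htIcc.1 fun h => hnm (by simp [← h])
          rw [hF t htb, hty]
          rw [if_pos ⟨htIcc.1, htb.le.trans hbc⟩]
          exact (hxv t ⟨hta, htb⟩).symm

theorem stmt_6 (m : ℕ) (x y : ℝ → ℝ)
    (hx : AntitoneOn x (Set.Icc 0 1)) (hy : AntitoneOn y (Set.Icc 0 1))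
    (hxr : ∀ q ∈ Set.Icc (0:ℝ) 1, x q ∈ Set.Icc (0:ℝ) 1)
    (hyr : ∀ q ∈ Set.Icc (0:ℝ) 1, y q ∈ Set.Icc (0:ℝ) 1)
    (p : Fin (m + 1) → ℝ) (hp : Monotone p) (hp0 : p 0 = 0) (hpm : p (Fin.last m) = 1)
    (hpiece : ∀ i : Fin m, ∀ s ∈ Set.Ioo (p i.castSucc) (p i.succ),
      ∀ t ∈ Set.Ioo (p i.castSucc) (p i.succ), x s = x t ∧ y s = y t)
    (hdom : ∀ q ∈ Set.Icc (0:ℝ) 1, ∫ t in (0:ℝ)..q, x t ≤ ∫ t in (0:ℝ)..q, y t)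
    (heq1 : ∫ t in (0:ℝ)..1, x t = ∫ t in (0:ℝ)..1, y t) :
    ∃ L : List (ℝ × ℝ), L.length ≤ m ∧
      (∀ p' ∈ L, 0 ≤ p'.1 ∧ p'.1 ≤ p'.2 ∧ p'.2 ≤ 1) ∧
      (L.foldl resample y) =ᵐ[volume.restrict (Set.Icc (0:ℝ) 1)] x := by
  have := key m x y p hp hpm (hp0 ▸ hx) (hp0 ▸ hy) (hp0 ▸ hxr) (hp0 ▸ hyr)
    (fun i s hs t ht => (hpiece i s hs t ht).1) (hp0 ▸ hdom) (hp0 ▸ heq1)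
  rwa [hp0] at this
end

section
/- Interval resampling preserves dominance and decreases cumulative allocation pointwise: if y : [0,1] → ℝ is non-increasing and y' is obtained from y by averaging y over an interval [a,b] ⊆ [0,1], then y' is non-increasing, ∫₀^q y'(t) dt ≤ ∫₀^q y(t) dt for all q ∈ [0,1], and ∫₀¹ y' = ∫₀¹ y. -/
open MeasureTheory intervalIntegral Set

theorem stmt_7 (y y' : ℝ → ℝ) (a b : ℝ) (hab : a < b)
    (hsub : Set.Icc a b ⊆ Set.Icc (0:ℝ) 1)
    (hy : AntitoneOn y (Set.Icc 0 1))
    (hy' : ∀ t, y' t = if t ∈ Set.Icc a b then (∫ s in a..b, y s) / (b - a) else y t) :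
    AntitoneOn y' (Set.Icc 0 1) ∧
    (∀ q ∈ Set.Icc (0:ℝ) 1, ∫ t in (0:ℝ)..q, y' t ≤ ∫ t in (0:ℝ)..q, y t) ∧
    ∫ t in (0:ℝ)..1, y' t = ∫ t in (0:ℝ)..1, y t := by
  have haMem : a ∈ Set.Icc (0:ℝ) 1 := hsub (Set.left_mem_Icc.mpr hab.le)
  have hbMem : b ∈ Set.Icc (0:ℝ) 1 := hsub (Set.right_mem_Icc.mpr hab.le)
  have ha0 : 0 ≤ a := haMem.1
  have hb1 : b ≤ 1 := hbMem.2
  have hba : 0 < b - a := sub_pos.mpr hab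
  set c : ℝ := (∫ s in a..b, y s) / (b - a) with hc
  -- integrability of y on subintervals of [0,1]
  have hyint : ∀ u v : ℝ, 0 ≤ u → u ≤ 1 → 0 ≤ v → v ≤ 1 → IntervalIntegrable y volume u v := by
    intro u v h1 h2 h3 h4
    exact (hy.mono (Set.uIcc_subset_Icc ⟨h1, h2⟩ ⟨h3, h4⟩)).intervalIntegrable
  -- bounds on c
  have hca : c ≤ y a := by
    rw [hc, div_le_iff₀ hba]
    have h1 : ∫ s in a..b, y s ≤ ∫ s in a..b, (fun _ => y a) s :=
      integral_mono_on hab.le (hyint a b ha0 haMem.2 hbMem.1 hb1) intervalIntegrable_const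
        (fun t ht => hy haMem (hsub ht) ht.1)
    simpa [smul_eq_mul, mul_comm] using h1
  have hbc : y b ≤ c := by
    rw [hc, le_div_iff₀ hba]
    have h1 : ∫ s in a..b, (fun _ => y b) s ≤ ∫ s in a..b, y s :=
      integral_mono_on hab.le intervalIntegrable_const (hyint a b ha0 haMem.2 hbMem.1 hb1)
        (fun t ht => hy (hsub ht) hbMem ht.2)
    simpa [smul_eq_mul, mul_comm] using h1
  -- antitonicity of y'
  have hy'anti : AntitoneOn y' (Set.Icc 0 1) := by
    intro s hs t ht hst
    rw [hy' s, hy' t]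
    split_ifs with h1 h2 h2
    · exact le_rfl
    · -- t ∈ [a,b], s ∉ [a,b]; hence s < a
      have hsa : s < a := by
        by_contra h
        exact h2 ⟨not_lt.mp h, hst.trans h1.2⟩
      exact hca.trans (hy hs haMem hsa.le)
    · -- s ∈ [a,b], t ∉ [a,b]; hence b < t
      have hbt : b < t := by
        by_contra h
        exact h1 ⟨h2.1.trans hst, not_lt.mp h⟩
      exact (hy hbMem ht hbt.le).trans hbc
    · exact hy hs ht hst
  have hy'int : ∀ u v : ℝ, 0 ≤ u → u ≤ 1 → 0 ≤ v → v ≤ 1 → IntervalIntegrable y' volume u v := by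
    intro u v h1 h2 h3 h4
    exact (hy'anti.mono (Set.uIcc_subset_Icc ⟨h1, h2⟩ ⟨h3, h4⟩)).intervalIntegrable
  have hne : ∀ x₀ : ℝ, ∀ᵐ t : ℝ, t ≠ x₀ := by
    intro x₀
    filter_upwards [(Set.countable_singleton x₀).ae_notMem volume] with t ht
    simpa using ht
  -- ∫₀^q y' = ∫₀^q y for q ≤ a
  have congr0a : ∀ q : ℝ, 0 ≤ q → q ≤ a → ∫ t in (0:ℝ)..q, y' t = ∫ t in (0:ℝ)..q, y t := by
    intro q hq0 hqa
    apply intervalIntegral.integral_congr_ae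
    filter_upwards [hne a] with t hta ht
    rw [Set.uIoc_of_le hq0] at ht
    rw [hy' t, if_neg]
    intro hmem
    exact hta (le_antisymm (ht.2.trans hqa) hmem.1)
  -- ∫_a^q y' = (q-a) * c for a ≤ q ≤ b
  have congrab : ∀ q : ℝ, a ≤ q → q ≤ b → ∫ t in a..q, y' t = (q - a) * c := by
    intro q h1 h2
    have : ∫ t in a..q, y' t = ∫ t in a..q, (fun _ => c) t := by
      apply integral_congr
      intro t ht
      rw [Set.uIcc_of_le h1] at ht
      rw [hy' t, if_pos ⟨ht.1, ht.2.trans h2⟩]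
    rw [this, intervalIntegral.integral_const, smul_eq_mul]
  -- ∫_b^q y' = ∫_b^q y for b ≤ q
  have congrbq : ∀ q : ℝ, b ≤ q → ∫ t in b..q, y' t = ∫ t in b..q, y t := by
    intro q hbq
    apply intervalIntegral.integral_congr_ae
    apply Filter.Eventually.of_forall
    intro t ht
    rw [Set.uIoc_of_le hbq] at ht
    rw [hy' t, if_neg]
    intro hmem
    exact absurd hmem.2 (not_le.mpr ht.1)
  -- key inequality for a ≤ q ≤ b
  have keyq : ∀ q : ℝ, a ≤ q → q ≤ b → (q - a) * c ≤ ∫ t in a..q, y t := by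
    intro q h1 h2
    have hq0 : 0 ≤ q := ha0.trans h1
    have hq1 : q ≤ 1 := h2.trans hb1
    rw [hc, mul_comm, div_mul_eq_mul_div, div_le_iff₀ hba]
    have hsplit : (∫ t in a..q, y t) + ∫ t in q..b, y t = ∫ t in a..b, y t :=
      integral_add_adjacent_intervals (hyint a q ha0 haMem.2 hq0 hq1)
        (hyint q b hq0 hq1 hbMem.1 hb1)
    have hqMem : q ∈ Set.Icc (0:ℝ) 1 := ⟨hq0, hq1⟩
    have hI1 : y q * (q - a) ≤ ∫ t in a..q, y t := by
      have h1' : ∫ t in a..q, (fun _ => y q) t ≤ ∫ t in a..q, y t :=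
        integral_mono_on h1 intervalIntegrable_const (hyint a q ha0 haMem.2 hq0 hq1)
          (fun t ht => hy ⟨ha0.trans ht.1, (ht.2.trans h2).trans hb1⟩ hqMem ht.2)
      simpa [smul_eq_mul, mul_comm] using h1'
    have hI2 : ∫ t in q..b, y t ≤ y q * (b - q) := by
      have h1' : ∫ t in q..b, y t ≤ ∫ t in q..b, (fun _ => y q) t :=
        integral_mono_on h2 (hyint q b hq0 hq1 hbMem.1 hb1) intervalIntegrable_const
          (fun t ht => hy hqMem ⟨hq0.trans ht.1, ht.2.trans hb1⟩ ht.1)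
      simpa [smul_eq_mul, mul_comm] using h1'
    nlinarith [sub_nonneg.mpr h1, sub_nonneg.mpr h2]
  -- equality of ∫ over [a,b]
  have habeq : (b - a) * c = ∫ t in a..b, y t := by
    rw [hc, mul_div_cancel₀ _ hba.ne']
  -- full equality for q ≥ b
  have heq : ∀ q : ℝ, b ≤ q → q ≤ 1 → ∫ t in (0:ℝ)..q, y' t = ∫ t in (0:ℝ)..q, y t := by
    intro q hbq hq1
    have hq0 : 0 ≤ q := hbMem.1.trans hbq
    have s1 : (∫ t in (0:ℝ)..a, y' t) + ∫ t in a..q, y' t = ∫ t in (0:ℝ)..q, y' t :=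
      integral_add_adjacent_intervals (hy'int 0 a le_rfl zero_le_one ha0 haMem.2)
        (hy'int a q ha0 haMem.2 hq0 hq1)
    have s1' : (∫ t in a..b, y' t) + ∫ t in b..q, y' t = ∫ t in a..q, y' t :=
      integral_add_adjacent_intervals (hy'int a b ha0 haMem.2 hbMem.1 hb1)
        (hy'int b q hbMem.1 hb1 hq0 hq1)
    have s2 : (∫ t in (0:ℝ)..a, y t) + ∫ t in a..q, y t = ∫ t in (0:ℝ)..q, y t :=
      integral_add_adjacent_intervals (hyint 0 a le_rfl zero_le_one ha0 haMem.2)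
        (hyint a q ha0 haMem.2 hq0 hq1)
    have s2' : (∫ t in a..b, y t) + ∫ t in b..q, y t = ∫ t in a..q, y t :=
      integral_add_adjacent_intervals (hyint a b ha0 haMem.2 hbMem.1 hb1)
        (hyint b q hbMem.1 hb1 hq0 hq1)
    rw [← s1, ← s2, ← s1', ← s2', congr0a a ha0 le_rfl, congrab b hab.le le_rfl, habeq,
      congrbq q hbq]
  refine ⟨hy'anti, ?_, heq 1 hb1 le_rfl⟩
  intro q hq
  obtain ⟨hq0, hq1⟩ := hq
  rcases le_or_gt q a with hqa | hqa
  · exact le_of_eq (congr0a q hq0 hqa)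
  rcases le_or_gt q b with hqb | hqb
  · have s1 : (∫ t in (0:ℝ)..a, y' t) + ∫ t in a..q, y' t = ∫ t in (0:ℝ)..q, y' t :=
      integral_add_adjacent_intervals (hy'int 0 a le_rfl zero_le_one ha0 haMem.2)
        (hy'int a q ha0 haMem.2 hq0 hq1)
    have s2 : (∫ t in (0:ℝ)..a, y t) + ∫ t in a..q, y t = ∫ t in (0:ℝ)..q, y t :=
      integral_add_adjacent_intervals (hyint 0 a le_rfl zero_le_one ha0 haMem.2)
        (hyint a q ha0 haMem.2 hq0 hq1)
    rw [← s1, ← s2, congr0a a ha0 le_rfl, congrab q hqa.le hqb]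
    exact add_le_add_right (keyq q hqa.le hqb) _
  · exact le_of_eq (heq q hqb.le hq1)
end

section
/- For the single-agent budget problem (value v ∼ F regular with non-decreasing density f, budget B) and q ≤ 1 − F(B): the optimal q-step mechanism offers a single take-it-or-leave-it lottery at price B serving with probability π, purchased exactly by types v ≥ B/π; the parameters satisfy the two equations π = B/v* and v*·q + B·F(v*) = B, where v* = B/π. Consequently, as q increases, v* strictly decreases and π strictly increases. -/
open MeasureTheory Set

lemma aux_swap (a b : ℝ) (x w : ℝ → ℝ) (hxm : Measurable x)
    (hx0 : ∀ u, 0 ≤ x u) (hx1 : ∀ u, x u ≤ 1) (hwm : Measurable w)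
    (hwi : IntegrableOn w (Set.Ioc a b)) :
    ∫ v in Set.Ioc a b, w v * (∫ u in Set.Ioc a v, x u) =
      ∫ u in Set.Ioc a b, x u * (∫ v in Set.Ioc u b, w v) := by
  set μ := volume.restrict (Set.Ioc a b) with hμ
  haveI : IsFiniteMeasure μ := by
    constructor
    rw [hμ, Measure.restrict_apply_univ]
    exact measure_Ioc_lt_top
  have hmeas : Measurable (Function.uncurry fun v u => if u ≤ v then w v * x u else (0:ℝ)) := by
    have : Measurable fun p : ℝ × ℝ => w p.1 * x p.2 :=
      (hwm.comp measurable_fst).mul (hxm.comp measurable_snd)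
    exact Measurable.ite (measurableSet_le measurable_snd measurable_fst) this measurable_const
  have hK : Integrable (Function.uncurry fun v u => if u ≤ v then w v * x u else (0:ℝ)) (μ.prod μ) := by
    have hbound : Integrable (fun p : ℝ × ℝ => |w p.1| * (fun _ : ℝ => (1:ℝ)) p.2) (μ.prod μ) :=
      Integrable.mul_prod hwi.abs (integrable_const 1)
    refine Integrable.mono' hbound hmeas.aestronglyMeasurable ?_
    refine Filter.Eventually.of_forall ?_
    rintro ⟨v, u⟩
    simp only [Function.uncurry]
    by_cases h : u ≤ v
    · simp only [h, if_true, Real.norm_eq_abs, abs_mul, mul_one]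
      have hxu : |x u| ≤ 1 := by rw [abs_of_nonneg (hx0 u)]; exact hx1 u
      calc |w v| * |x u| ≤ |w v| * 1 := mul_le_mul_of_nonneg_left hxu (abs_nonneg _)
        _ = |w v| := mul_one _
    · simp only [h, if_false, norm_zero, mul_one]
      exact abs_nonneg _
  have hswap := MeasureTheory.integral_integral_swap hK
  -- LHS inner computation
  have hL : ∀ v ∈ Set.Ioc a b,
      (∫ u, (if u ≤ v then w v * x u else (0:ℝ)) ∂μ) = w v * ∫ u in Set.Ioc a v, x u := by
    intro v hv
    have h1 : (fun u => if u ≤ v then w v * x u else (0:ℝ))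
        = Set.indicator (Set.Iic v) (fun u => w v * x u) := by
      ext u; simp [Set.indicator_apply, Set.mem_Iic]
    rw [hμ, h1, MeasureTheory.integral_indicator measurableSet_Iic,
      Measure.restrict_restrict measurableSet_Iic]
    have h2 : Set.Iic v ∩ Set.Ioc a b = Set.Ioc a v := by
      ext u
      simp only [Set.mem_inter_iff, Set.mem_Iic, Set.mem_Ioc]
      constructor
      · rintro ⟨h3, h4, h5⟩; exact ⟨h4, h3⟩
      · rintro ⟨h3, h4⟩; exact ⟨h4, h3, h4.trans hv.2⟩
    rw [h2, integral_const_mul]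
  -- RHS inner computation
  have hR : ∀ u ∈ Set.Ioc a b,
      (∫ v, (if u ≤ v then w v * x u else (0:ℝ)) ∂μ) = x u * ∫ v in Set.Ioc u b, w v := by
    intro u hu
    have h1 : (fun v => if u ≤ v then w v * x u else (0:ℝ))
        = Set.indicator (Set.Ici u) (fun v => w v * x u) := by
      ext v; simp [Set.indicator_apply, Set.mem_Ici]
    rw [hμ, h1, MeasureTheory.integral_indicator measurableSet_Ici,
      Measure.restrict_restrict measurableSet_Ici]
    have h2 : Set.Ici u ∩ Set.Ioc a b = Set.Icc u b := by
      ext v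
      simp only [Set.mem_inter_iff, Set.mem_Ici, Set.mem_Ioc, Set.mem_Icc]
      constructor
      · rintro ⟨h3, _, h5⟩; exact ⟨h3, h5⟩
      · rintro ⟨h3, h4⟩; exact ⟨h3, hu.1.trans_le h3, h4⟩
    rw [h2, MeasureTheory.integral_Icc_eq_integral_Ioc, integral_mul_const]
    ring
  calc ∫ v in Set.Ioc a b, w v * (∫ u in Set.Ioc a v, x u)
      = ∫ v, (∫ u, (if u ≤ v then w v * x u else (0:ℝ)) ∂μ) ∂μ := by
        refine (setIntegral_congr_fun measurableSet_Ioc ?_).symm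
        intro v hv; exact hL v hv
    _ = ∫ u, (∫ v, (if u ≤ v then w v * x u else (0:ℝ)) ∂μ) ∂μ := hswap
    _ = ∫ u in Set.Ioc a b, x u * (∫ v in Set.Ioc u b, w v) := by
        refine setIntegral_congr_fun measurableSet_Ioc ?_
        intro u hu; exact hR u hu

set_option maxHeartbeats 2000000 in
lemma aux_opt (vbar B : ℝ) (F f : ℝ → ℝ)
    (hvbar : B < vbar) (hB : 0 < B)
    (hF0 : F 0 = 0) (hF1 : F vbar = 1)
    (hFderiv : ∀ v ∈ Set.Icc 0 vbar, HasDerivAt F (f v) v)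
    (hfpos : ∀ v ∈ Set.Icc 0 vbar, 0 < f v)
    (hfmono : MonotoneOn f (Set.Icc 0 vbar))
    (q t : ℝ) (hq : 0 < q)
    (htB : B ≤ t) (htvb : t ≤ vbar) (hteq : t * q + B * F t = B)
    (x : ℝ → ℝ) (hxmono : MonotoneOn x (Set.Icc 0 vbar))
    (hx01 : ∀ v ∈ Set.Icc 0 vbar, x v ∈ Set.Icc (0:ℝ) 1)
    (hbud : ∀ v ∈ Set.Icc 0 vbar, v * x v - (∫ u in (0:ℝ)..v, x u) ≤ B)
    (hquota : (∫ v in (0:ℝ)..vbar, x v * f v) = q) :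
    (∫ v in (0:ℝ)..vbar, (v * x v - ∫ u in (0:ℝ)..v, x u) * f v) ≤ B * (1 - F t) := by
  have h0t : 0 < t := lt_of_lt_of_le hB htB
  have h0vbar : 0 ≤ vbar := by linarith
  have htmem : t ∈ Icc (0:ℝ) vbar := ⟨h0t.le, htvb⟩
  -- continuity and monotonicity of F
  have hFc : ContinuousOn F (Icc 0 vbar) := fun v hv =>
    (hFderiv v hv).continuousAt.continuousWithinAt
  have hFmono : MonotoneOn F (Icc 0 vbar) := by
    have := strictMonoOn_of_hasDerivWithinAt_pos (convex_Icc (0:ℝ) vbar) hFc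
      (f' := f) (fun v hv => (hFderiv v (interior_subset hv)).hasDerivWithinAt)
      (fun v hv => hfpos v (interior_subset hv))
    exact this.monotoneOn
  -- constants
  set a : ℝ := f t with ha_def
  set s : ℝ := 1 - F t with hs_def
  have ha : 0 < a := hfpos t htmem
  have hs0 : 0 ≤ s := by
    have : F t ≤ F vbar := hFmono htmem (right_mem_Icc.2 h0vbar) htvb
    simp only [hs_def]; rw [hF1] at this; linarith
  have hden : 0 < t * a + s := by positivity
  set μ : ℝ := t ^ 2 * a / (t * a + s) with hμ_def
  have hμ0 : 0 ≤ μ := by positivity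
  have hμt : μ ≤ t := by
    rw [hμ_def, div_le_iff₀ hden]; nlinarith
  have htμ : t - μ = t * s / (t * a + s) := by
    rw [hμ_def]; field_simp; ring
  have hμs : t * a * (t - μ) = μ * s := by
    rw [htμ, hμ_def]; field_simp
  have hq' : t * q = B * s := by simp only [hs_def]; linarith
  set Ptv : ℝ := s * ((t - μ) / t) with hPtv_def
  have hPtv0 : 0 ≤ Ptv := by
    apply mul_nonneg hs0; apply div_nonneg (by linarith) h0t.le
  have hPtvs : Ptv ≤ s := by
    rw [hPtv_def]
    have h1 : (t - μ) / t ≤ 1 := by rw [div_le_one h0t]; linarith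
    nlinarith
  -- clamp
  set c : ℝ → ℝ := fun v => min (max v 0) vbar with hc_def
  have hcmem : ∀ v, c v ∈ Icc (0:ℝ) vbar := fun v =>
    ⟨le_min (le_max_right v 0) h0vbar, min_le_right _ _⟩
  have hceq : ∀ v ∈ Icc (0:ℝ) vbar, c v = v := by
    intro v hv
    simp only [hc_def]
    rw [max_eq_left hv.1, min_eq_left hv.2]
  have hcmono : Monotone c := fun u v h =>
    min_le_min (max_le_max h le_rfl) le_rfl
  set cx : ℝ → ℝ := fun v => x (c v) with hcx_def
  set cf : ℝ → ℝ := fun v => f (c v) with hcf_def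
  set cF : ℝ → ℝ := fun v => F (c v) with hcF_def
  have hcxmono : Monotone cx := fun u v h => hxmono (hcmem u) (hcmem v) (hcmono h)
  have hcfmono : Monotone cf := fun u v h => hfmono (hcmem u) (hcmem v) (hcmono h)
  have hcx0 : ∀ v, 0 ≤ cx v := fun v => (hx01 _ (hcmem v)).1
  have hcx1 : ∀ v, cx v ≤ 1 := fun v => (hx01 _ (hcmem v)).2
  have hcf0 : ∀ v, 0 ≤ cf v := fun v => (hfpos _ (hcmem v)).le
  have hcxeq : ∀ v ∈ Icc (0:ℝ) vbar, cx v = x v := fun v hv => by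
    simp only [hcx_def]; rw [hceq v hv]
  have hcfeq : ∀ v ∈ Icc (0:ℝ) vbar, cf v = f v := fun v hv => by
    simp only [hcf_def]; rw [hceq v hv]
  have hcFeq : ∀ v ∈ Icc (0:ℝ) vbar, cF v = F v := fun v hv => by
    simp only [hcF_def]; rw [hceq v hv]
  have hccont : Continuous c := (continuous_id.max continuous_const).min continuous_const
  have hcFcont : Continuous cF := hFc.comp_continuous hccont hcmem
  have hcxmeas : Measurable cx := hcxmono.measurable
  have hcfmeas : Measurable cf := hcfmono.measurable
  -- subinterval inclusion
  have hsub : ∀ a' b', a' ∈ Icc (0:ℝ) vbar → b' ∈ Icc (0:ℝ) vbar →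
      uIcc a' b' ⊆ Icc (0:ℝ) vbar := by
    intro a' b' ha' hb'
    rw [← uIcc_of_le h0vbar] at ha' hb' ⊢
    exact uIcc_subset_uIcc ha' hb'
  have hintf : ∀ a' b', a' ∈ Icc (0:ℝ) vbar → b' ∈ Icc (0:ℝ) vbar →
      IntervalIntegrable f volume a' b' := fun a' b' ha' hb' =>
    (hfmono.mono (hsub a' b' ha' hb')).intervalIntegrable
  -- primitive X
  set X : ℝ → ℝ := fun v => ∫ u in (0:ℝ)..v, cx u with hX_def
  have hXcont : ContinuousOn X (Icc 0 vbar) := by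
    have h1 : IntegrableOn cx (uIcc (0:ℝ) vbar) volume := by
      rw [uIcc_of_le h0vbar]
      rw [← intervalIntegrable_iff_integrableOn_Icc_of_le h0vbar]
      exact hcxmono.intervalIntegrable
    have := intervalIntegral.continuousOn_primitive_interval h1
    rwa [uIcc_of_le h0vbar] at this
  have hXeq : ∀ v ∈ Icc (0:ℝ) vbar, X v = ∫ u in (0:ℝ)..v, x u := by
    intro v hv
    apply intervalIntegral.integral_congr
    intro u hu
    exact hcxeq u (hsub 0 v (left_mem_Icc.2 h0vbar) hv hu)
  have hXt0 : 0 ≤ X t :=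
    intervalIntegral.integral_nonneg h0t.le (fun u _ => hcx0 u)
  -- FTC for F
  have hFTC : ∀ a' b', a' ∈ Icc (0:ℝ) vbar → b' ∈ Icc (0:ℝ) vbar →
      (∫ v in a'..b', f v) = F b' - F a' := by
    intro a' b' ha' hb'
    exact intervalIntegral.integral_eq_sub_of_hasDerivAt
      (fun v hv => hFderiv v (hsub a' b' ha' hb' hv)) (hintf a' b' ha' hb')
  -- lam and its primitive
  set lam : ℝ → ℝ := fun v => cf v * ((v - μ) / v) - μ * (1 - cF v) / v ^ 2 with hlam_def
  set Pm : ℝ → ℝ := fun v => -((1 - F v) * ((v - μ) / v)) with hPm_def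
  have hlammeas : Measurable lam := by
    apply Measurable.sub
    · exact hcfmeas.mul ((measurable_id.sub_const μ).div measurable_id)
    · exact ((measurable_const.mul ((measurable_const.sub hcFcont.measurable))).div
        (measurable_id.pow_const 2))
  have hlamderiv : ∀ v ∈ Icc t vbar, HasDerivAt Pm (lam v) v := by
    intro v hv
    have hvmem : v ∈ Icc (0:ℝ) vbar := ⟨le_trans h0t.le hv.1, hv.2⟩
    have hv0 : v ≠ 0 := by have := lt_of_lt_of_le h0t hv.1; linarith
    have h1 : HasDerivAt (fun y : ℝ => (y - μ) / y)
        ((1 * v - (v - μ) * 1) / v ^ 2) v := by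
      exact ((hasDerivAt_id v).sub_const μ).div (hasDerivAt_id v) hv0
    have h2 : HasDerivAt (fun y : ℝ => 1 - F y) (0 - f v) v :=
      (hasDerivAt_const v 1).sub (hFderiv v hvmem)
    have h3 := (h2.mul h1).neg
    refine h3.congr_deriv (Eq.symm ?_)
    have hcfv : cf v = f v := hcfeq v hvmem
    have hcFv : cF v = F v := hcFeq v hvmem
    simp only [hlam_def, hcfv, hcFv]
    field_simp
    ring
  have hlamint : IntervalIntegrable lam volume t vbar := by
    apply IntervalIntegrable.sub
    · apply hcfmono.intervalIntegrable.mul_continuousOn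
      apply ContinuousOn.div
      · exact (continuous_id.sub continuous_const).continuousOn
      · exact continuous_id.continuousOn
      · intro v hv
        rw [uIcc_of_le htvb] at hv
        exact ne_of_gt (lt_of_lt_of_le h0t hv.1)
    · apply ContinuousOn.intervalIntegrable
      apply ContinuousOn.div
      · exact (continuous_const.mul (continuous_const.sub hcFcont)).continuousOn
      · exact (continuous_pow 2).continuousOn
      · intro v hv
        rw [uIcc_of_le htvb] at hv
        have := lt_of_lt_of_le h0t hv.1
        positivity
  have hlamFTC : ∀ u ∈ Icc t vbar, (∫ v in u..vbar, lam v) = (1 - F u) * ((u - μ) / u) := by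
    intro u hu
    have : (∫ v in u..vbar, lam v) = Pm vbar - Pm u := by
      apply intervalIntegral.integral_eq_sub_of_hasDerivAt
      · intro v hv
        apply hlamderiv
        rw [uIcc_of_le hu.2] at hv
        exact ⟨le_trans hu.1 hv.1, hv.2⟩
      · exact hlamint.mono_set (by rw [uIcc_of_le hu.2, uIcc_of_le htvb]; exact Icc_subset_Icc hu.1 le_rfl)
    rw [this]
    simp only [hPm_def]
    rw [hF1]
    ring
  have hlamt : (∫ v in t..vbar, lam v) = Ptv := by
    rw [hlamFTC t (left_mem_Icc.2 htvb), hPtv_def, hs_def]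
  -- nonnegativity of lam on [t, vbar]
  have hlamnn : ∀ v ∈ Icc t vbar, 0 ≤ lam v := by
    intro v hv
    have hvmem : v ∈ Icc (0:ℝ) vbar := ⟨le_trans h0t.le hv.1, hv.2⟩
    have hv0 : 0 < v := lt_of_lt_of_le h0t hv.1
    have hcfv : cf v = f v := hcfeq v hvmem
    have hcFv : cF v = F v := hcFeq v hvmem
    have hfv : a ≤ f v := hfmono htmem hvmem hv.1
    have hFv : F t ≤ F v := hFmono htmem hvmem hv.1
    have hlamv : lam v = (v * f v * (v - μ) - μ * (1 - F v)) / v ^ 2 := by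
      simp only [hlam_def, hcfv, hcFv]
      field_simp
    rw [hlamv]
    apply div_nonneg _ (by positivity)
    have hfv0 : (0:ℝ) ≤ f v := le_trans ha.le hfv
    have e1 : t * a ≤ v * f v := mul_le_mul hv.1 hfv ha.le hv0.le
    have h1 : t * a * (t - μ) ≤ v * f v * (v - μ) :=
      mul_le_mul e1 (by linarith [hv.1]) (by linarith) (mul_nonneg hv0.le hfv0)
    have h2 : μ * (1 - F v) ≤ μ * s := by
      simp only [hs_def]; nlinarith
    linarith [hμs]
  -- W bound on [0, t]
  have hWbd : ∀ v ∈ Icc (0:ℝ) t, (v - μ) * f v - (1 - F v) ≤ -Ptv := by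
    intro v hv
    have hvmem : v ∈ Icc (0:ℝ) vbar := ⟨hv.1, le_trans hv.2 htvb⟩
    have hFv : F v ≤ F t := hFmono hvmem htmem hv.2
    have hfv0 : 0 ≤ f v := (hfpos v hvmem).le
    rcases le_or_gt v μ with hvμ | hvμ
    · have h1 : (v - μ) * f v ≤ 0 := mul_nonpos_of_nonpos_of_nonneg (by linarith) hfv0
      have h2 : s ≤ 1 - F v := by simp only [hs_def]; linarith
      linarith [hPtvs]
    · have hfv : f v ≤ a := hfmono hvmem htmem hv.2
      have h1 : (v - μ) * f v ≤ (t - μ) * a :=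
        mul_le_mul (by linarith [hv.2]) hfv hfv0 (by linarith)
      have h2 : 1 - F t ≤ 1 - F v := by linarith
      have hkey : (t - μ) * a - s + Ptv = 0 := by
        rw [hPtv_def, htμ]
        field_simp
        ring
      simp only [hs_def] at hkey ⊢
      linarith
    -- integrability toolkit
  have hcxint : ∀ a' b' : ℝ, IntervalIntegrable cx volume a' b' := fun a' b' =>
    hcxmono.intervalIntegrable
  have hcfint : ∀ a' b' : ℝ, IntervalIntegrable cf volume a' b' := fun a' b' =>
    hcfmono.intervalIntegrable
  have hcxcf : Monotone (fun v => cx v * cf v) := fun u v h =>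
    mul_le_mul (hcxmono h) (hcfmono h) (hcf0 u) (le_trans (hcx0 v) (by linarith [hcx0 v]))
  have hXconu : ∀ a' b', a' ∈ Icc (0:ℝ) vbar → b' ∈ Icc (0:ℝ) vbar →
      ContinuousOn X (uIcc a' b') := fun a' b' ha' hb' => hXcont.mono (hsub a' b' ha' hb')
  have h0mem : (0:ℝ) ∈ Icc (0:ℝ) vbar := left_mem_Icc.2 h0vbar
  have hvmem' : vbar ∈ Icc (0:ℝ) vbar := right_mem_Icc.2 h0vbar
  -- FTC for cf
  have hFTCc : ∀ a' b', a' ∈ Icc (0:ℝ) vbar → b' ∈ Icc (0:ℝ) vbar → a' ≤ b' →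
      (∫ v in a'..b', cf v) = F b' - F a' := by
    intro a' b' ha' hb' _
    rw [intervalIntegral.integral_congr (g := f) (fun v hv => hcfeq v (hsub a' b' ha' hb' hv))]
    exact hFTC a' b' ha' hb'
  -- Step A : Myerson-type identity via Fubini
  have hIA : (∫ v in (0:ℝ)..vbar, cf v * X v) = ∫ u in (0:ℝ)..vbar, cx u * (1 - cF u) := by
    have hswap := aux_swap 0 vbar cx cf hcxmeas hcx0 hcx1 hcfmeas ((hcfint 0 vbar).1)
    have e1 : ∫ v in Ioc (0:ℝ) vbar, cf v * (∫ u in Ioc (0:ℝ) v, cx u) =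
        ∫ v in Ioc (0:ℝ) vbar, cf v * X v := by
      apply setIntegral_congr_fun measurableSet_Ioc
      intro v hv
      rw [hX_def]
      simp only
      rw [intervalIntegral.integral_of_le hv.1.le]
    have e2 : ∫ u in Ioc (0:ℝ) vbar, cx u * (∫ v in Ioc u vbar, cf v) =
        ∫ u in Ioc (0:ℝ) vbar, cx u * (1 - cF u) := by
      apply setIntegral_congr_fun measurableSet_Ioc
      intro u hu
      have humem : u ∈ Icc (0:ℝ) vbar := ⟨hu.1.le, hu.2⟩
      simp only
      rw [← intervalIntegral.integral_of_le hu.2, hFTCc u vbar humem hvmem' hu.2,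
        hF1, hcFeq u humem]
    rw [intervalIntegral.integral_of_le h0vbar, intervalIntegral.integral_of_le h0vbar,
      ← e1, ← e2, hswap]
  -- quota in clamped form
  have hquotac : (∫ v in (0:ℝ)..vbar, cx v * cf v) = q := by
    rw [intervalIntegral.integral_congr (g := fun v => x v * f v) ?_]
    · exact hquota
    · intro v hv
      have hvm := hsub 0 vbar h0mem hvmem' hv
      simp only
      rw [hcxeq v hvm, hcfeq v hvm]
  -- revenue rewritten
  have hR1 : (∫ v in (0:ℝ)..vbar, (v * x v - ∫ u in (0:ℝ)..v, x u) * f v)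
      = ∫ v in (0:ℝ)..vbar, ((cx v * cf v) * v - cf v * X v) := by
    apply intervalIntegral.integral_congr
    intro v hv
    have hvm := hsub 0 vbar h0mem hvmem' hv
    simp only
    rw [hcxeq v hvm, hcfeq v hvm, hXeq v hvm]
    ring
  have int_vcxcf : ∀ a' b' : ℝ, IntervalIntegrable (fun v => (cx v * cf v) * v) volume a' b' :=
    fun a' b' => hcxcf.intervalIntegrable.mul_continuousOn continuousOn_id
  have int_cfX : ∀ a' b', a' ∈ Icc (0:ℝ) vbar → b' ∈ Icc (0:ℝ) vbar →
      IntervalIntegrable (fun v => cf v * X v) volume a' b' := fun a' b' ha' hb' =>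
    (hcfint a' b').mul_continuousOn (hXconu a' b' ha' hb')
  have hR2 : (∫ v in (0:ℝ)..vbar, (v * x v - ∫ u in (0:ℝ)..v, x u) * f v)
      = (∫ v in (0:ℝ)..vbar, (cx v * cf v) * v) - ∫ u in (0:ℝ)..vbar, cx u * (1 - cF u) := by
    rw [hR1, intervalIntegral.integral_sub (int_vcxcf 0 vbar) (int_cfX 0 vbar h0mem hvmem'), hIA]
  -- the W-integral
  have intW : ∀ a' b' : ℝ,
      IntervalIntegrable (fun v => (cx v * cf v) * (v - μ) - cx v * (1 - cF v)) volume a' b' :=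
    fun a' b' =>
    (hcxcf.intervalIntegrable.mul_continuousOn
      ((continuous_id.sub continuous_const).continuousOn)).sub
      ((hcxint a' b').mul_continuousOn ((continuous_const.sub hcFcont).continuousOn))
  have hIWsplit : (∫ v in (0:ℝ)..vbar, ((cx v * cf v) * (v - μ) - cx v * (1 - cF v)))
      = (∫ v in (0:ℝ)..t, ((cx v * cf v) * (v - μ) - cx v * (1 - cF v)))
        + ∫ v in t..vbar, ((cx v * cf v) * (v - μ) - cx v * (1 - cF v)) :=
    (intervalIntegral.integral_add_adjacent_intervals (intW 0 t) (intW t vbar)).symm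
  have hRW : (∫ v in (0:ℝ)..vbar, (v * x v - ∫ u in (0:ℝ)..v, x u) * f v)
      = (∫ v in (0:ℝ)..vbar, ((cx v * cf v) * (v - μ) - cx v * (1 - cF v))) + μ * q := by
    rw [hR2]
    have e3 : (fun v => (cx v * cf v) * (v - μ) - cx v * (1 - cF v))
        = fun v => ((cx v * cf v) * v - cx v * (1 - cF v)) - (cx v * cf v) * μ := by
      funext v; ring
    rw [e3, intervalIntegral.integral_sub
      ((int_vcxcf 0 vbar).sub ((hcxint 0 vbar).mul_continuousOn
        ((continuous_const.sub hcFcont).continuousOn)) : IntervalIntegrable (fun v => (cx v * cf v) * v - cx v * (1 - cF v)) volume 0 vbar)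
      (hcxcf.intervalIntegrable.mul_continuousOn continuousOn_const),
      intervalIntegral.integral_sub (int_vcxcf 0 vbar)
      ((hcxint 0 vbar).mul_continuousOn ((continuous_const.sub hcFcont).continuousOn) : IntervalIntegrable (fun v => cx v * (1 - cF v)) volume 0 vbar),
      intervalIntegral.integral_mul_const, hquotac]
    ring
  -- bound on [0, t]
  have hIW1 : (∫ v in (0:ℝ)..t, ((cx v * cf v) * (v - μ) - cx v * (1 - cF v)))
      ≤ X t * (-Ptv) := by
    have hmono := intervalIntegral.integral_mono_on h0t.le (intW 0 t)
      ((hcxint 0 t).mul_continuousOn (continuousOn_const (c := -Ptv)))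
      (g := fun v => cx v * (-Ptv)) ?_
    · calc (∫ v in (0:ℝ)..t, ((cx v * cf v) * (v - μ) - cx v * (1 - cF v)))
          ≤ ∫ v in (0:ℝ)..t, cx v * (-Ptv) := hmono
        _ = X t * (-Ptv) := by
            rw [intervalIntegral.integral_mul_const]
    · intro v hv
      have hvmem : v ∈ Icc (0:ℝ) vbar := ⟨hv.1, le_trans hv.2 htvb⟩
      have : (cx v * cf v) * (v - μ) - cx v * (1 - cF v)
          = cx v * ((v - μ) * f v - (1 - F v)) := by
        rw [hcfeq v hvmem, hcFeq v hvmem]; ring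
      rw [this]
      exact mul_le_mul_of_nonneg_left (hWbd v hv) (hcx0 v)
  -- [t, vbar] analysis
  have hcont_div1 : ContinuousOn (fun v : ℝ => μ * (1 - cF v) / v) (uIcc t vbar) := by
    apply ContinuousOn.div
    · exact (continuous_const.mul (continuous_const.sub hcFcont)).continuousOn
    · exact continuousOn_id
    · intro v hv
      rw [uIcc_of_le htvb] at hv
      exact ne_of_gt (lt_of_lt_of_le h0t hv.1)
  have hcont_P : ContinuousOn (fun v : ℝ => (1 - cF v) * ((v - μ) / v)) (uIcc t vbar) := by
    apply ContinuousOn.mul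
    · exact (continuous_const.sub hcFcont).continuousOn
    · apply ContinuousOn.div
      · exact (continuous_id.sub continuous_const).continuousOn
      · exact continuousOn_id
      · intro v hv
        rw [uIcc_of_le htvb] at hv
        exact ne_of_gt (lt_of_lt_of_le h0t hv.1)
  have intJ1 : IntervalIntegrable
      (fun v => (cx v * cf v) * (v - μ) - cx v * (μ * (1 - cF v) / v)) volume t vbar :=
    (hcxcf.intervalIntegrable.mul_continuousOn
      ((continuous_id.sub continuous_const).continuousOn)).sub
      ((hcxint t vbar).mul_continuousOn hcont_div1)
  have intJ2 : IntervalIntegrable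
      (fun v => cx v * ((1 - cF v) * ((v - μ) / v))) volume t vbar :=
    (hcxint t vbar).mul_continuousOn hcont_P
  have intJ3 : IntervalIntegrable (fun v => lam v * X v) volume t vbar :=
    hlamint.mul_continuousOn (hXconu t vbar htmem hvmem')
  -- c1 : IW2 = J1 - J2
  have hc1 : (∫ v in t..vbar, ((cx v * cf v) * (v - μ) - cx v * (1 - cF v)))
      = (∫ v in t..vbar, ((cx v * cf v) * (v - μ) - cx v * (μ * (1 - cF v) / v)))
        - ∫ v in t..vbar, cx v * ((1 - cF v) * ((v - μ) / v)) := by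
    rw [← intervalIntegral.integral_sub intJ1 intJ2]
    apply intervalIntegral.integral_congr
    intro v hv
    rw [uIcc_of_le htvb] at hv
    have hv0 : v ≠ 0 := ne_of_gt (lt_of_lt_of_le h0t hv.1)
    simp only
    field_simp
    ring
  -- c2 : J3 = J2 + Ptv * X t  (integration by parts via Fubini)
  have hc2 : (∫ v in t..vbar, lam v * X v)
      = (∫ v in t..vbar, cx v * ((1 - cF v) * ((v - μ) / v))) + Ptv * X t := by
    have hswap := aux_swap t vbar cx lam hcxmeas hcx0 hcx1 hlammeas hlamint.1
    have e1 : ∫ v in Ioc t vbar, lam v * (∫ u in Ioc t v, cx u) =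
        ∫ v in Ioc t vbar, lam v * (X v - X t) := by
      apply setIntegral_congr_fun measurableSet_Ioc
      intro v hv
      simp only
      rw [← intervalIntegral.integral_of_le hv.1.le,
        intervalIntegral.integral_interval_sub_left (hcxint 0 v) (hcxint 0 t)]
    have e2 : ∫ u in Ioc t vbar, cx u * (∫ v in Ioc u vbar, lam v) =
        ∫ u in Ioc t vbar, cx u * ((1 - cF u) * ((u - μ) / u)) := by
      apply setIntegral_congr_fun measurableSet_Ioc
      intro u hu
      have humem : u ∈ Icc (0:ℝ) vbar := ⟨le_trans h0t.le hu.1.le, hu.2⟩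
      simp only
      rw [← intervalIntegral.integral_of_le hu.2, hlamFTC u ⟨hu.1.le, hu.2⟩, hcFeq u humem]
    have key : (∫ v in t..vbar, lam v * (X v - X t))
        = ∫ v in t..vbar, cx v * ((1 - cF v) * ((v - μ) / v)) := by
      rw [intervalIntegral.integral_of_le htvb, intervalIntegral.integral_of_le htvb,
        ← e1, ← e2, hswap]
    have e4 : (fun v => lam v * X v)
        = fun v => lam v * (X v - X t) + lam v * X t := by
      funext v; ring
    rw [e4, intervalIntegral.integral_add
      (hlamint.mul_continuousOn (((hXconu t vbar htmem hvmem').sub continuousOn_const)) : IntervalIntegrable (fun v => lam v * (X v - X t)) volume t vbar)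
      (hlamint.mul_continuousOn continuousOn_const),
      key, intervalIntegral.integral_mul_const, hlamt]
  -- c3 : J1 - J3 ≤ Ptv * B
  have hc3 : (∫ v in t..vbar, ((cx v * cf v) * (v - μ) - cx v * (μ * (1 - cF v) / v)))
      - (∫ v in t..vbar, lam v * X v) ≤ Ptv * B := by
    rw [← intervalIntegral.integral_sub intJ1 intJ3]
    have hmono := intervalIntegral.integral_mono_on htvb (intJ1.sub intJ3)
      (hlamint.mul_continuousOn (continuousOn_const (c := B)))
      (g := fun v => lam v * B) ?_
    · calc _ ≤ ∫ v in t..vbar, lam v * B := hmono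
        _ = Ptv * B := by rw [intervalIntegral.integral_mul_const, hlamt]
    · intro v hv
      have hvmem : v ∈ Icc (0:ℝ) vbar := ⟨le_trans h0t.le hv.1, hv.2⟩
      have hv0 : v ≠ 0 := ne_of_gt (lt_of_lt_of_le h0t hv.1)
      have hpb : v * cx v - X v ≤ B := by
        rw [hcxeq v hvmem, hXeq v hvmem]
        exact hbud v hvmem
      have halg : (cx v * cf v) * (v - μ) - cx v * (μ * (1 - cF v) / v) - lam v * X v
          = lam v * (v * cx v - X v) := by
        simp only [hlam_def]
        field_simp
      rw [halg]
      exact mul_le_mul_of_nonneg_left (by linarith [hpb]) (hlamnn v hv)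
  -- assemble
  have hfinal : B * Ptv + μ * q = B * s := by
    have hqv : q = B * s / t := by
      rw [eq_div_iff (ne_of_gt h0t)]
      linarith [hq']
    rw [hPtv_def, hqv]
    field_simp
    ring
  have hIW2 : (∫ v in t..vbar, ((cx v * cf v) * (v - μ) - cx v * (1 - cF v)))
      ≤ Ptv * B + Ptv * X t := by
    rw [hc1]
    have := hc3
    rw [hc2] at this
    linarith
  rw [hRW]
  have hs' : B * (1 - F t) = B * s := by rw [hs_def]
  rw [hs']
  calc (∫ v in (0:ℝ)..vbar, ((cx v * cf v) * (v - μ) - cx v * (1 - cF v))) + μ * q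
      ≤ (X t * (-Ptv) + (Ptv * B + Ptv * X t)) + μ * q := by
        rw [hIWsplit]; linarith [hIW1, hIW2]
    _ = B * Ptv + μ * q := by ring
    _ = B * s := hfinal

set_option maxHeartbeats 2000000 in
theorem stmt_12 (vbar B : ℝ) (F f : ℝ → ℝ)
    (hvbar : B < vbar) (hB : 0 < B)
    (hF0 : F 0 = 0) (hF1 : F vbar = 1)
    (hFderiv : ∀ v ∈ Set.Icc 0 vbar, HasDerivAt F (f v) v)
    (hfpos : ∀ v ∈ Set.Icc 0 vbar, 0 < f v)
    (hfmono : MonotoneOn f (Set.Icc 0 vbar))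
    (hreg : MonotoneOn (fun v => v - (1 - F v) / f v) (Set.Icc 0 vbar))
    (q : ℝ) (hq : 0 < q) (hqB : q ≤ 1 - F B) :
    ∃ vstar pi : ℝ, B ≤ vstar ∧ vstar ≤ vbar ∧ 0 < pi ∧ pi ≤ 1 ∧
      pi * vstar = B ∧ (1 - F vstar) * pi = q ∧ vstar * q + B * F vstar = B ∧
      -- the take-it-or-leave-it lottery at price B serving with probability pi,
      -- bought exactly by types v ≥ vstar = B / pi, is a feasible q-step mechanism
      -- and is revenue optimal among all feasible (monotone, IC/IR payment,
      -- budget-respecting, ex ante probability q) allocation rules: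
      ((MonotoneOn (fun v => if vstar ≤ v then pi else 0) (Set.Icc 0 vbar) ∧
        (∀ v ∈ Set.Icc 0 vbar, (if vstar ≤ v then pi else 0) ∈ Set.Icc (0:ℝ) 1) ∧
        (∀ v ∈ Set.Icc 0 vbar,
          v * (if vstar ≤ v then pi else 0)
            - (∫ u in (0:ℝ)..v, (if vstar ≤ u then pi else 0)) ≤ B) ∧
        (∫ v in (0:ℝ)..vbar, (if vstar ≤ v then pi else 0) * f v) = q) ∧
       (∀ x : ℝ → ℝ, MonotoneOn x (Set.Icc 0 vbar) →
         (∀ v ∈ Set.Icc 0 vbar, x v ∈ Set.Icc (0:ℝ) 1) →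
         (∀ v ∈ Set.Icc 0 vbar, v * x v - (∫ u in (0:ℝ)..v, x u) ≤ B) →
         (∫ v in (0:ℝ)..vbar, x v * f v) = q →
         (∫ v in (0:ℝ)..vbar, (v * x v - ∫ u in (0:ℝ)..v, x u) * f v)
           ≤ ∫ v in (0:ℝ)..vbar,
               (v * (if vstar ≤ v then pi else 0)
                 - ∫ u in (0:ℝ)..v, (if vstar ≤ u then pi else 0)) * f v)) ∧
      -- as q increases, vstar strictly decreases and pi strictly increases:
      (∀ q' vstar' pi', q < q' → q' ≤ 1 - F B →
        0 < pi' → pi' * vstar' = B → (1 - F vstar') * pi' = q' →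
        B ≤ vstar' → vstar' ≤ vbar →
        vstar' < vstar ∧ pi < pi') := by
  have h0vbar : 0 ≤ vbar := by linarith
  have hFc : ContinuousOn F (Icc 0 vbar) := fun v hv =>
    (hFderiv v hv).continuousAt.continuousWithinAt
  have hFmono : MonotoneOn F (Icc 0 vbar) := by
    have := strictMonoOn_of_hasDerivWithinAt_pos (convex_Icc (0:ℝ) vbar) hFc
      (f' := f) (fun v hv => (hFderiv v (interior_subset hv)).hasDerivWithinAt)
      (fun v hv => hfpos v (interior_subset hv))
    exact this.monotoneOn
  -- existence of vstar by IVT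
  obtain ⟨t, htmem, hgt⟩ : ∃ t ∈ Icc B vbar, t * q + B * F t - B = 0 := by
    have hsubBv : Icc B vbar ⊆ Icc (0:ℝ) vbar := Icc_subset_Icc hB.le le_rfl
    have hgc : ContinuousOn (fun v => v * q + B * F v - B) (Icc B vbar) := by
      apply ContinuousOn.sub
      · exact (continuousOn_id.mul continuousOn_const).add
          (continuousOn_const.mul (hFc.mono hsubBv))
      · exact continuousOn_const
    have hgB : B * q + B * F B - B ≤ 0 := by nlinarith
    have hgvbar : 0 ≤ vbar * q + B * F vbar - B := by
      rw [hF1]; nlinarith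
    have h0 : (0:ℝ) ∈ Icc (B * q + B * F B - B) (vbar * q + B * F vbar - B) :=
      ⟨hgB, hgvbar⟩
    obtain ⟨t, ht1, ht2⟩ := intermediate_value_Icc hvbar.le hgc h0
    exact ⟨t, ht1, ht2⟩
  have hteq : t * q + B * F t = B := by linarith
  have htB : B ≤ t := htmem.1
  have htvb : t ≤ vbar := htmem.2
  have h0t : 0 < t := lt_of_lt_of_le hB htB
  have htIcc : t ∈ Icc (0:ℝ) vbar := ⟨h0t.le, htvb⟩
  set pi : ℝ := B / t with hpi_def
  have hpi0 : 0 < pi := div_pos hB h0t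
  have hpit : pi * t = B := div_mul_cancel₀ B (ne_of_gt h0t)
  have hpi1 : pi ≤ 1 := by
    rw [hpi_def, div_le_one h0t]; exact htB
  have hFtq : (1 - F t) * pi = q := by
    rw [hpi_def]
    field_simp
    linarith
  -- step allocation basics
  have hstepmono : Monotone (fun u => if t ≤ u then pi else 0) := by
    intro u v h
    dsimp only
    by_cases h1 : t ≤ u
    · rw [if_pos h1, if_pos (le_trans h1 h)]
    · by_cases h2 : t ≤ v
      · rw [if_neg h1, if_pos h2]; exact hpi0.le
      · rw [if_neg h1, if_neg h2]
  have hstepint : ∀ a' b' : ℝ,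
      IntervalIntegrable (fun u => if t ≤ u then pi else 0) volume a' b' :=
    fun a' b' => hstepmono.intervalIntegrable
  have hae_ne : ∀ᵐ u : ℝ, u ≠ t := by
    refine ae_iff.2 ?_
    have : {u : ℝ | ¬u ≠ t} = {t} := by ext u; simp
    rw [this]
    exact measure_singleton t
  have hprim0 : ∀ v, 0 ≤ v → v ≤ t →
      (∫ u in (0:ℝ)..v, (if t ≤ u then pi else 0)) = 0 := by
    intro v h0v hvt
    rw [intervalIntegral.integral_of_le h0v]
    rw [setIntegral_congr_ae measurableSet_Ioc
      (g := fun _ => (0:ℝ)) ?_]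
    · simp
    · filter_upwards [hae_ne] with u hu
      intro humem
      rw [if_neg]
      intro h1
      exact hu (le_antisymm (le_trans humem.2 hvt) h1)
  have hprim1 : ∀ v, t ≤ v →
      (∫ u in (0:ℝ)..v, (if t ≤ u then pi else 0)) = pi * (v - t) := by
    intro v hv
    rw [← intervalIntegral.integral_add_adjacent_intervals (hstepint 0 t) (hstepint t v),
      hprim0 t h0t.le le_rfl, zero_add,
      intervalIntegral.integral_congr (g := fun _ => pi)
        (fun u hu => if_pos (by rw [uIcc_of_le hv] at hu; exact hu.1)),
      intervalIntegral.integral_const]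
    simp [smul_eq_mul]
    ring
  -- step * f integrable
  have hstepf_mono : MonotoneOn (fun v => (if t ≤ v then pi else 0) * f v) (Icc 0 vbar) := by
    intro u hu v hv h
    exact mul_le_mul (hstepmono h) (hfmono hu hv h) (hfpos u hu).le
      (by split <;> [exact hpi0.le; exact le_rfl])
  have hstepfint : ∀ a' b', a' ∈ Icc (0:ℝ) vbar → b' ∈ Icc (0:ℝ) vbar →
      IntervalIntegrable (fun v => (if t ≤ v then pi else 0) * f v) volume a' b' := by
    intro a' b' ha' hb'
    apply MonotoneOn.intervalIntegrable
    apply hstepf_mono.mono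
    rw [← uIcc_of_le h0vbar] at ha' hb' ⊢
    exact uIcc_subset_uIcc ha' hb'
  have h0mem : (0:ℝ) ∈ Icc (0:ℝ) vbar := left_mem_Icc.2 h0vbar
  have hvmem' : vbar ∈ Icc (0:ℝ) vbar := right_mem_Icc.2 h0vbar
  have hFTC : ∀ a' b', a' ∈ Icc (0:ℝ) vbar → b' ∈ Icc (0:ℝ) vbar →
      (∫ v in a'..b', f v) = F b' - F a' := by
    intro a' b' ha' hb'
    apply intervalIntegral.integral_eq_sub_of_hasDerivAt
    · intro v hv
      apply hFderiv
      rw [← uIcc_of_le h0vbar]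
      refine uIcc_subset_uIcc ?_ ?_ hv <;> rwa [uIcc_of_le h0vbar]
    · apply MonotoneOn.intervalIntegrable
      apply hfmono.mono
      rw [← uIcc_of_le h0vbar] at ha' hb' ⊢
      exact uIcc_subset_uIcc ha' hb'
  have hquota_step : (∫ v in (0:ℝ)..vbar, (if t ≤ v then pi else 0) * f v) = q := by
    rw [← intervalIntegral.integral_add_adjacent_intervals
      (hstepfint 0 t h0mem htIcc) (hstepfint t vbar htIcc hvmem')]
    have e1 : (∫ v in (0:ℝ)..t, (if t ≤ v then pi else 0) * f v) = 0 := by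
      rw [intervalIntegral.integral_of_le h0t.le]
      rw [setIntegral_congr_ae measurableSet_Ioc (g := fun _ => (0:ℝ)) ?_]
      · simp
      · filter_upwards [hae_ne] with u hu
        intro humem
        rw [if_neg, zero_mul]
        intro h1
        exact hu (le_antisymm humem.2 h1)
    have e2 : (∫ v in t..vbar, (if t ≤ v then pi else 0) * f v) = pi * (1 - F t) := by
      rw [intervalIntegral.integral_congr (g := fun v => pi * f v)
        (fun v hv => by rw [uIcc_of_le htvb] at hv; simp only; rw [if_pos hv.1]),
        intervalIntegral.integral_const_mul, hFTC t vbar htIcc hvmem', hF1]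
    rw [e1, e2, zero_add]
    linarith [hFtq]
  -- revenue of the step mechanism
  have hRxs : (∫ v in (0:ℝ)..vbar,
      (v * (if t ≤ v then pi else 0) - ∫ u in (0:ℝ)..v, (if t ≤ u then pi else 0)) * f v)
      = B * (1 - F t) := by
    have e0 : ∀ v ∈ Icc (0:ℝ) vbar,
        (v * (if t ≤ v then pi else 0) - ∫ u in (0:ℝ)..v, (if t ≤ u then pi else 0)) * f v
          = (if t ≤ v then B else 0) * f v := by
      intro v hv
      by_cases h1 : t ≤ v
      · rw [if_pos h1, if_pos h1, hprim1 v h1]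
        have : v * pi - pi * (v - t) = B := by rw [← hpit]; ring
        rw [this]
      · rw [if_neg h1, if_neg h1, hprim0 v hv.1 (le_of_not_ge h1)]
        ring
    rw [intervalIntegral.integral_congr (g := fun v => (if t ≤ v then B else 0) * f v)
      (fun v hv => e0 v (by rwa [uIcc_of_le h0vbar] at hv))]
    have hBstep_mono : MonotoneOn (fun v => (if t ≤ v then B else 0) * f v) (Icc 0 vbar) := by
      intro u hu v hv h
      have hm : Monotone (fun u : ℝ => if t ≤ u then B else 0) := by
        intro u' v' h'
        dsimp only
        by_cases h1 : t ≤ u'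
        · rw [if_pos h1, if_pos (le_trans h1 h')]
        · by_cases h2 : t ≤ v'
          · rw [if_neg h1, if_pos h2]; exact hB.le
          · rw [if_neg h1, if_neg h2]
      exact mul_le_mul (hm h) (hfmono hu hv h) (hfpos u hu).le
        (by split <;> [exact hB.le; exact le_rfl])
    have hBstepint : ∀ a' b', a' ∈ Icc (0:ℝ) vbar → b' ∈ Icc (0:ℝ) vbar →
        IntervalIntegrable (fun v => (if t ≤ v then B else 0) * f v) volume a' b' := by
      intro a' b' ha' hb'
      apply MonotoneOn.intervalIntegrable
      apply hBstep_mono.mono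
      rw [← uIcc_of_le h0vbar] at ha' hb' ⊢
      exact uIcc_subset_uIcc ha' hb'
    rw [← intervalIntegral.integral_add_adjacent_intervals
      (hBstepint 0 t h0mem htIcc) (hBstepint t vbar htIcc hvmem')]
    have e1 : (∫ v in (0:ℝ)..t, (if t ≤ v then B else 0) * f v) = 0 := by
      rw [intervalIntegral.integral_of_le h0t.le]
      rw [setIntegral_congr_ae measurableSet_Ioc (g := fun _ => (0:ℝ)) ?_]
      · simp
      · filter_upwards [hae_ne] with u hu
        intro humem
        rw [if_neg, zero_mul]
        intro h1
        exact hu (le_antisymm humem.2 h1)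
    have e2 : (∫ v in t..vbar, (if t ≤ v then B else 0) * f v) = B * (1 - F t) := by
      rw [intervalIntegral.integral_congr (g := fun v => B * f v)
        (fun v hv => by rw [uIcc_of_le htvb] at hv; simp only; rw [if_pos hv.1]),
        intervalIntegral.integral_const_mul, hFTC t vbar htIcc hvmem', hF1]
    rw [e1, e2, zero_add]
  refine ⟨t, pi, htB, htvb, hpi0, hpi1, hpit, hFtq, hteq, ⟨⟨?_, ?_, ?_, ?_⟩, ?_⟩, ?_⟩
  · exact hstepmono.monotoneOn _
  · intro v hv
    split
    · exact ⟨hpi0.le, hpi1⟩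
    · exact ⟨le_rfl, by norm_num⟩
  · intro v hv
    by_cases h1 : t ≤ v
    · rw [if_pos h1, hprim1 v h1]
      have : v * pi - pi * (v - t) = B := by rw [← hpit]; ring
      rw [this]
    · rw [if_neg h1, hprim0 v hv.1 (le_of_not_ge h1)]
      simp [hB.le]
  · exact hquota_step
  · intro x hxmono hx01 hbud hxquota
    rw [hRxs]
    exact aux_opt vbar B F f hvbar hB hF0 hF1 hFderiv hfpos hfmono q t hq htB htvb hteq
      x hxmono hx01 hbud hxquota
  · intro q' t' pi' hqq' hq'B hpi' hpv' hFpi' hBt' ht'v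
    have h0t' : 0 < t' := lt_of_lt_of_le hB hBt'
    have ht'Icc : t' ∈ Icc (0:ℝ) vbar := ⟨h0t'.le, ht'v⟩
    have ht'eq : t' * q' = B * (1 - F t') := by
      have : t' * q' = (1 - F t') * (pi' * t') := by
        rw [← hFpi']; ring
      rw [this, hpv']; ring
    have htlt : t' < t := by
      by_contra hcon
      push_neg at hcon
      have hFle : F t ≤ F t' := hFmono htIcc ht'Icc hcon
      have h1 : t * q < t' * q' := by
        calc t * q ≤ t' * q := mul_le_mul_of_nonneg_right hcon hq.le
          _ < t' * q' := by exact mul_lt_mul_of_pos_left hqq' h0t'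
      have h2 : B * F t ≤ B * F t' := mul_le_mul_of_nonneg_left hFle hB.le
      have h3 : t' * q' + B * F t' = B := by linarith [ht'eq]
      linarith
    refine ⟨htlt, ?_⟩
    have hpi'eq : pi' = B / t' := by
      rw [eq_div_iff (ne_of_gt h0t')]
      exact hpv'
    rw [hpi_def, hpi'eq]
    exact div_lt_div_of_pos_left hB h0t' htlt
end
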